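/- No cycle of length at least 5 is 12-representable; equivalently, the cycle C_n for n ≥ 5 admits no {I_3, J_4, Q_4}-free labeling. -/

import Mathlib

/-- The subword of `w` consisting of the occurrences of `x` and `y`. -/
def subw {n : ℕ} (w : List (Fin n)) (x y : Fin n) : List (Fin n) :=
  w.filter fun a => decide (a = x ∨ a = y)

/-- A word has a 12-match if some letter is immediately followed by a strictly larger one. -/
def Has12 {n : ℕ} (s : List (Fin n)) : Prop :=
  ∃ a b : Fin n, a < b ∧ [a, b] <:+: s

/-- `w` 12-represents the labeled graph `G` on `Fin n`. -/
def Rep12 {n : ℕ} (w : List (Fin n)) (G : SimpleGraph (Fin n)) : Prop :=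
  (∀ i : Fin n, i ∈ w) ∧
  ∀ x y : Fin n, x ≠ y → (G.Adj x y ↔ ¬ Has12 (subw w x y))

/-- A graph is 12-representable if some labeling of its vertices admits a 12-representant. -/
def Rep12able {V : Type} [Fintype V] (G : SimpleGraph V) : Prop :=
  ∃ (f : V ≃ Fin (Fintype.card V)) (w : List (Fin (Fintype.card V))),
    Rep12 w (G.map f.toEmbedding)
/-- A labeled graph on `Fin n` is $\{I_3, J_4, Q_4\}$-free. -/
def I3J4Q4Free {n : ℕ} (G : SimpleGraph (Fin n)) : Prop :=
  (¬ ∃ a b c : Fin n, a < b ∧ b < c ∧ G.Adj a b ∧ G.Adj b c ∧ ¬ G.Adj a c) ∧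
  (¬ ∃ a b c d : Fin n, a < b ∧ b < c ∧ c < d ∧
    G.Adj a c ∧ G.Adj b d ∧ ¬ G.Adj a b ∧ ¬ G.Adj a d ∧ ¬ G.Adj b c ∧ ¬ G.Adj c d) ∧
  (¬ ∃ a b c d : Fin n, a < b ∧ b < c ∧ c < d ∧
    G.Adj a d ∧ G.Adj b c ∧ ¬ G.Adj a b ∧ ¬ G.Adj a c ∧ ¬ G.Adj b d ∧ ¬ G.Adj c d)

open List in
/-- x before y -/
def Bef {n : ℕ} (w : List (Fin n)) (x y : Fin n) : Prop :=
  ∃ i j : ℕ, ∃ _ : i < w.length, ∃ hj : j < w.length, i < j ∧ w[i] = x ∧ w[j] = y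

open List in
lemma sublist_of_bef {n : ℕ} {w : List (Fin n)} {x y : Fin n} (h : Bef w x y) :
    [x, y] <+ w := by
  obtain ⟨i, j, hi, hj, hij, hx, hy⟩ := h
  induction w generalizing i j with
  | nil => simp at hi
  | cons a t ih =>
    rcases i with _ | i
    · simp at hx
      subst hx
      have hyt : y ∈ t := by
        rcases j with _ | j
        · omega
        · simp at hy
          subst hy
          exact List.getElem_mem _
      exact (List.singleton_sublist.2 hyt).cons₂ _
    · rcases j with _ | j
      · omega
      · simp at hx hy
        exact (ih i j (by simpa using hi) (by simpa using hj) (by omega) hx hy).cons a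

open List in
lemma bef_of_sublist {n : ℕ} {w : List (Fin n)} {x y : Fin n} (h : [x, y] <+ w) :
    Bef w x y := by
  induction w with
  | nil => simp at h
  | cons a t ih =>
    rcases h with _ | ⟨h⟩ | ⟨h⟩
    · obtain ⟨i, j, hi, hj, hij, hx, hy⟩ := ih ‹_›
      exact ⟨i + 1, j + 1, by simpa using hi, by simpa using hj, by omega, by simpa, by simpa⟩
    · -- a = x, [y] <+ t
      have hyt : y ∈ t := (List.singleton_sublist.1 ‹_›)
      obtain ⟨j, hj, hy⟩ := List.mem_iff_getElem.1 hyt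
      exact ⟨0, j + 1, by simp, by simpa using hj, by omega, rfl, by simpa⟩

lemma mem_subw {n : ℕ} {w : List (Fin n)} {x y a : Fin n} (h : a ∈ subw w x y) :
    a = x ∨ a = y := by
  have := List.mem_filter.1 h
  simpa using this.2

open List in
lemma infix_two {n : ℕ} {x y : Fin n} (hxy : x ≠ y) :
    ∀ (s : List (Fin n)), (∀ a ∈ s, a = x ∨ a = y) → [x, y] <+ s → [x, y] <:+: s := by
  intro s
  induction s with
  | nil => intro _ h; simp at h
  | cons a t ih =>
    intro hmem h
    rcases List.sublist_cons_iff.1 h with h' | ⟨r, hr, h'⟩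
    · exact ((ih (fun b hb => hmem b (List.mem_cons_of_mem a hb)) h').trans
        (List.infix_cons (List.infix_refl t)))
    · obtain ⟨hax, hry⟩ := List.cons_eq_cons.1 hr
      subst hry
      rcases t with _ | ⟨b, t'⟩
      · simp at h'
      · rcases hmem b (by simp) with hb | hb
        · -- b = x : so [y] <+ t' and recurse on t = b :: t'
          have hy : [y] <+ t' := by
            rcases List.sublist_cons_iff.1 h' with h2 | ⟨r2, hr2, h2⟩
            · exact h2
            · exact absurd ((List.cons_eq_cons.1 hr2).1.trans hb) hxy.symm
          have hxy2 : [x, y] <+ b :: t' := by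
            rw [hb]; exact hy.cons₂ x
          exact (ih (fun c hc => hmem c (List.mem_cons_of_mem a hc)) hxy2).trans
            (List.infix_cons (List.infix_refl _))
        · -- b = y : [x,y] is a prefix of a :: b :: t'
          exact ⟨[], t', by simp [hax, hb]⟩

open List in
lemma has12_iff {n : ℕ} {w : List (Fin n)} {x y : Fin n} (h : x < y) :
    Has12 (subw w x y) ↔ Bef w x y := by
  constructor
  · rintro ⟨a, b, hab, hinf⟩
    have ha := hinf.sublist.subset (by simp : a ∈ [a, b])
    have hb := hinf.sublist.subset (by simp : b ∈ [a, b])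
    have ha' := mem_subw ha
    have hb' := mem_subw hb
    have : a = x ∧ b = y := by
      rcases ha' with rfl | rfl <;> rcases hb' with rfl | rfl
      · exact absurd hab (lt_irrefl _)
      · exact ⟨rfl, rfl⟩
      · exact absurd (hab.trans h) (lt_irrefl _)
      · exact absurd hab (lt_irrefl _)
    obtain ⟨rfl, rfl⟩ := this
    exact bef_of_sublist (hinf.sublist.trans List.filter_sublist)
  · intro hbef
    have h1 : [x, y] <+ w := sublist_of_bef hbef
    have h2 : [x, y] <+ subw w x y := by
      have := h1.filter (fun a => decide (a = x ∨ a = y))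
      simpa [subw] using this
    exact ⟨x, y, h, infix_two h.ne (subw w x y) (fun a ha => mem_subw ha) h2⟩

lemma repA {n : ℕ} {w : List (Fin n)} {G : SimpleGraph (Fin n)} (hw : Rep12 w G) :
    I3J4Q4Free G := by
  obtain ⟨hmem, hadj⟩ := hw
  have key : ∀ x y : Fin n, x < y → (G.Adj x y ↔ ¬ Bef w x y) := fun x y h =>
    (hadj x y h.ne).trans (not_congr (has12_iff h))
  have ord : ∀ x y : Fin n, x < y → G.Adj x y →
      ∀ i j (_ : i < w.length) (_ : j < w.length), w[i] = x → w[j] = y → j < i := by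
    intro x y h hxy i j hi hj hxi hyj
    have hnb := (key x y h).1 hxy
    have hne : i ≠ j := by
      rintro rfl
      exact h.ne (hxi ▸ hyj ▸ rfl)
    rcases lt_or_gt_of_ne hne with h' | h'
    · exact absurd ⟨i, j, hi, hj, h', hxi, hyj⟩ hnb
    · exact h'
  have nord : ∀ x y : Fin n, x < y → ¬ G.Adj x y → Bef w x y := by
    intro x y h hxy
    by_contra hb
    exact hxy ((key x y h).2 hb)
  refine ⟨?_, ?_, ?_⟩
  · rintro ⟨a, b, c, hab, hbc, e1, e2, e3⟩
    obtain ⟨i, j, hi, hj, hij, hx, hy⟩ := nord a c (hab.trans hbc) e3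
    obtain ⟨k, hk, hbk⟩ := List.mem_iff_getElem.1 (hmem b)
    have h1 := ord a b hab e1 i k hi hk hx hbk
    have h2 := ord b c hbc e2 k j hk hj hbk hy
    omega
  · rintro ⟨a, b, c, d, hab, hbc, hcd, eac, ebd, nab, nad, nbc, ncd⟩
    obtain ⟨ia, id', hia, hid, h1, hwa, hwd⟩ := nord a d (hab.trans (hbc.trans hcd)) nad
    obtain ⟨ib, ic, hib, hic, h2, hwb, hwc⟩ := nord b c hbc nbc
    have h3 := ord b d (hbc.trans hcd) ebd ib id' hib hid hwb hwd
    have h4 := ord a c (hab.trans hbc) eac ia ic hia hic hwa hwc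
    omega
  · rintro ⟨a, b, c, d, hab, hbc, hcd, ead, ebc, nab, nac, nbd, ncd⟩
    obtain ⟨ia, ic, hia, hic, h1, hwa, hwc⟩ := nord a c (hab.trans hbc) nac
    obtain ⟨ib, id', hib, hid, h2, hwb, hwd⟩ := nord b d (hbc.trans hcd) nbd
    have h3 := ord a d (hab.trans (hbc.trans hcd)) ead ia id' hia hid hwa hwd
    have h4 := ord b c hbc ebc ib ic hib hic hwb hwc
    omega

lemma one_lt_fin {m : ℕ} {c : Fin (m + 2)} (h0 : c ≠ 0) (h1 : c ≠ 1) : 1 < c := by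
  rw [Fin.lt_def, Fin.val_one]
  have b0 : c.val ≠ 0 := fun h => h0 (Fin.ext (by simpa using h))
  have b1 : c.val ≠ 1 := fun h => h1 (Fin.ext (by simp [h, Fin.val_one]))
  omega

lemma no_alt5 (P : Fin 5 → Prop) (hup : ∀ u, P u → P (u + 1) → False)
    (hdown : ∀ u, ¬P u → ¬P (u + 1) → False) : False := by
  have flip : ∀ u, P u ↔ ¬ P (u + 1) := fun u =>
    ⟨fun h h' => hup u h h', fun h => by_contra fun h' => hdown u h' h⟩
  have h0 := flip 0; have h1 := flip 1; have h2 := flip 2; have h3 := flip 3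
  have h4 := flip 4
  rw [show (0 : Fin 5) + 1 = 1 from by decide] at h0
  rw [show (1 : Fin 5) + 1 = 2 from by decide] at h1
  rw [show (2 : Fin 5) + 1 = 3 from by decide] at h2
  rw [show (3 : Fin 5) + 1 = 4 from by decide] at h3
  rw [show (4 : Fin 5) + 1 = 0 from by decide] at h4
  tauto

lemma two_edges {N : ℕ} {H : SimpleGraph (Fin N)}
    (hJ : ¬ ∃ a b c d : Fin N, a < b ∧ b < c ∧ c < d ∧ H.Adj a c ∧ H.Adj b d ∧
      ¬H.Adj a b ∧ ¬H.Adj a d ∧ ¬H.Adj b c ∧ ¬H.Adj c d)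
    (hQ : ¬ ∃ a b c d : Fin N, a < b ∧ b < c ∧ c < d ∧ H.Adj a d ∧ H.Adj b c ∧
      ¬H.Adj a b ∧ ¬H.Adj a c ∧ ¬H.Adj b d ∧ ¬H.Adj c d)
    {A B C D : Fin N} (h1 : A < B) (h2 : B < C) (h3 : B < D) (hCD : C ≠ D)
    (eAC : H.Adj A C) (eBD : H.Adj B D) (nAB : ¬H.Adj A B) (nAD : ¬H.Adj A D)
    (nBC : ¬H.Adj B C) (nCD : ¬H.Adj C D) : False := by
  rcases lt_or_gt_of_ne hCD with h | h
  · exact hJ ⟨A, B, C, D, h1, h2, h, eAC, eBD, nAB, nAD, nBC, nCD⟩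
  · exact hQ ⟨A, B, D, C, h1, h3, h, eAC, eBD, nAB, nAD, nBC, fun hh => nCD hh.symm⟩

open Fin.CommRing in
lemma partB {n : ℕ} (hn : 5 ≤ n) (f : Fin n ≃ Fin n) :
    ¬ I3J4Q4Free ((SimpleGraph.cycleGraph n).map f.toEmbedding) := by
  rintro ⟨hI, hJ, hQ⟩
  obtain ⟨m, rfl⟩ : ∃ m, n = m + 2 := ⟨n - 2, by omega⟩
  set cyc := SimpleGraph.cycleGraph (m + 2) with hcyc
  have adj_iff : ∀ u v : Fin (m + 2), cyc.Adj u v ↔ u - v = 1 ∨ v - u = 1 := fun u v =>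
    SimpleGraph.cycleGraph_adj
  have hH : ∀ u v : Fin (m + 2),
      ((cyc.map f.toEmbedding).Adj (f u) (f v)) ↔ cyc.Adj u v := by
    intro u v
    constructor
    · rintro ⟨-, u', v', h, hu, hv⟩
      have hu' : u' = u := f.injective hu
      have hv' : v' = v := f.injective hv
      rwa [hu', hv'] at h
    · intro h
      exact ⟨fun e => h.ne (f.injective e), u, v, h, rfl, rfl⟩
  have hI3 : ∀ u v q : Fin (m + 2), cyc.Adj u v → cyc.Adj v q → ¬ cyc.Adj u q →
      f u < f v → f v < f q → False := by
    intro u v q a1 a2 na l1 l2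
    exact hI ⟨f u, f v, f q, l1, l2, (hH u v).2 a1, (hH v q).2 a2,
      fun hh => na ((hH u q).1 hh)⟩
  -- nonadjacency of consecutive triples : every vertex is a local extremum
  rcases Nat.lt_or_ge (m + 2) 6 with h5 | h6
  · -- n = 5 case
    have hm : m = 3 := by omega
    subst hm
    have nonadj2 : ∀ u : Fin 5, ¬ cyc.Adj u (u + 2) := by
      intro u h
      rcases (adj_iff u (u + 2)).1 h with e | e
      · exact absurd (show (3 : Fin 5) = 0 by linear_combination -e) (by decide)
      · exact absurd (show (1 : Fin 5) = 0 by linear_combination e) (by decide)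
    have adj1 : ∀ u : Fin 5, cyc.Adj u (u + 1) := fun u =>
      (adj_iff u (u + 1)).2 (Or.inr (by ring))
    have up : ∀ u : Fin 5, f u < f (u + 1) → f (u + 1) < f (u + 1 + 1) → False := by
      intro u h1 h2
      exact hI3 u (u + 1) (u + 1 + 1) (adj1 u) (adj1 (u + 1))
        (by rw [show u + 1 + 1 = u + 2 by ring]; exact nonadj2 u) h1 h2
    have down : ∀ u : Fin 5, ¬ f u < f (u + 1) → ¬ f (u + 1) < f (u + 1 + 1) → False := by
      intro u h1 h2
      have ne1 : f (u + 1) ≠ f u := fun h => by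
        have : u + 1 = u := f.injective h
        exact absurd (show (1 : Fin 5) = 0 by linear_combination this) (by decide)
      have ne2 : f (u + 1 + 1) ≠ f (u + 1) := fun h => by
        have : u + 1 + 1 = u + 1 := f.injective h
        exact absurd (show (1 : Fin 5) = 0 by linear_combination this) (by decide)
      have l1 : f (u + 1) < f u := lt_of_le_of_ne (not_lt.1 h1) ne1
      have l2 : f (u + 1 + 1) < f (u + 1) := lt_of_le_of_ne (not_lt.1 h2) ne2
      exact hI3 (u + 1 + 1) (u + 1) u ((adj1 (u + 1)).symm) ((adj1 u).symm)
        (fun h => nonadj2 u (by have h2 := h.symm; rwa [show u + 1 + 1 = u + 2 by ring] at h2)) l2 l1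
    exact no_alt5 (fun u => f u < f (u + 1)) up down
  · -- n ≥ 6 case
    have hz : ∀ j : ℕ, j ≠ 0 → j < m + 2 → ((j : ℕ) : Fin (m + 2)) ≠ 0 := by
      intro j hj hjm h
      have h2 := congrArg Fin.val h
      rw [Fin.val_cast_of_lt hjm] at h2
      simp at h2
      omega
    have h1z : (1 : Fin (m + 2)) ≠ 0 := one_ne_zero
    have h2z : (2 : Fin (m + 2)) ≠ 0 := by
      have := hz 2 (by omega) (by omega); rwa [Nat.cast_ofNat] at this
    have h3z : (3 : Fin (m + 2)) ≠ 0 := by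
      have := hz 3 (by omega) (by omega); rwa [Nat.cast_ofNat] at this
    have h4z : (4 : Fin (m + 2)) ≠ 0 := by
      have := hz 4 (by omega) (by omega); rwa [Nat.cast_ofNat] at this
    have h5z : (5 : Fin (m + 2)) ≠ 0 := by
      have := hz 5 (by omega) (by omega); rwa [Nat.cast_ofNat] at this
    set s := f.symm 0 with hsdef
    set p := f.symm 1 with hpdef
    have hs : f s = 0 := f.apply_symm_apply 0
    have hp : f p = 1 := f.apply_symm_apply 1
    have l01 : (0 : Fin (m + 2)) < 1 := by
      rw [Fin.lt_def, Fin.val_one]; simp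
    -- s and p are not adjacent (else I3)
    have hnsp : ¬ cyc.Adj s p := by
      intro hadj
      obtain ⟨q, A2, N1, hq0, hq1⟩ : ∃ q : Fin (m + 2), cyc.Adj p q ∧ ¬ cyc.Adj s q ∧
          q ≠ s ∧ q ≠ p := by
        rcases (adj_iff s p).1 hadj with e | e
        · -- s - p = 1, take q = p - 1
          refine ⟨p - 1, (adj_iff p (p - 1)).2 (Or.inl (by ring)), ?_, ?_, ?_⟩
          · intro h
            rcases (adj_iff s (p - 1)).1 h with e' | e'
            · exact h1z (by linear_combination e' - e)
            · exact h3z (by linear_combination -e' - e)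
          · intro h
            exact h2z (by linear_combination -e - h)
          · intro h
            exact h1z (by linear_combination -h)
        · -- p - s = 1, take q = p + 1
          refine ⟨p + 1, (adj_iff p (p + 1)).2 (Or.inr (by ring)), ?_, ?_, ?_⟩
          · intro h
            rcases (adj_iff s (p + 1)).1 h with e' | e'
            · exact h3z (by linear_combination -e' - e)
            · exact h1z (by linear_combination e' - e)
          · intro h
            exact h2z (by linear_combination h - e)
          · intro h
            exact h1z (by linear_combination h)
      have hfq0 : f q ≠ 0 := fun h => hq0 (f.injective (h.trans hs.symm))
      have hfq1 : f q ≠ 1 := fun h => hq1 (f.injective (h.trans hp.symm))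
      exact hI3 s p q hadj A2 N1 (by rw [hs, hp]; exact l01)
        (by rw [hp]; exact one_lt_fin hfq0 hfq1)
    have hps : p ≠ s := fun h => h1z (by rw [← hp, h, hs])
    have hk0 : p - s ≠ 0 := fun h => hps (by linear_combination h)
    have hk1 : p - s ≠ 1 := fun h => hnsp ((adj_iff s p).2 (Or.inr h))
    have hkm : p - s + 1 ≠ 0 := fun h => hnsp ((adj_iff s p).2 (Or.inl (by linear_combination -h)))
    -- the common finishing move
    have finish : ∀ X Y : Fin (m + 2), cyc.Adj s X → cyc.Adj p Y →
        ¬ cyc.Adj s Y → ¬ cyc.Adj X p → ¬ cyc.Adj X Y →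
        X ≠ s → X ≠ p → Y ≠ s → Y ≠ p → X ≠ Y → False := by
      intro X Y aSX aPY nSY nXP nXY hXs hXp hYs hYp hXY
      have hC0 : f X ≠ 0 := fun h => hXs (f.injective (h.trans hs.symm))
      have hC1 : f X ≠ 1 := fun h => hXp (f.injective (h.trans hp.symm))
      have hD0 : f Y ≠ 0 := fun h => hYs (f.injective (h.trans hs.symm))
      have hD1 : f Y ≠ 1 := fun h => hYp (f.injective (h.trans hp.symm))
      have hCD : f X ≠ f Y := fun h => hXY (f.injective h)
      refine two_edges hJ hQ (H := cyc.map f.toEmbedding)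
        (A := f s) (B := f p) (C := f X) (D := f Y)
        ?_ ?_ ?_ hCD ((hH s X).2 aSX) ((hH p Y).2 aPY)
        (fun h => hnsp ((hH s p).1 h)) (fun h => nSY ((hH s Y).1 h))
        (fun h => nXP (((hH p X).1 h).symm)) (fun h => nXY ((hH X Y).1 h))
      · rw [hs, hp]; exact l01
      · rw [hp]; exact one_lt_fin hC0 hC1
      · rw [hp]; exact one_lt_fin hD0 hD1
    by_cases hA : p - s + 2 = 0 ∨ p - s + 3 = 0
    · by_cases hB : p - s = 2 ∨ p - s = 3
      · -- case (iii) : k = 3 and n = 6 essentially ; edges {s,s+1},{p,p+1}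
        have hk3 : p - s = 3 := by
          rcases hB with h | h
          · exfalso
            rcases hA with h' | h'
            · exact h4z (by linear_combination h' - h)
            · exact h5z (by linear_combination h' - h)
          · exact h
        refine finish (s + 1) (p + 1)
          ((adj_iff s (s + 1)).2 (Or.inr (by ring)))
          ((adj_iff p (p + 1)).2 (Or.inr (by ring)))
          ?_ ?_ ?_ ?_ ?_ ?_ ?_ ?_
        · intro h
          rcases (adj_iff s (p + 1)).1 h with e | e
          · exact h5z (by linear_combination -e - hk3)
          · exact hk0 (by linear_combination e)
        · intro h
          rcases (adj_iff (s + 1) p).1 h with e | e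
          · exact hk0 (by linear_combination -e)
          · exact h1z (by linear_combination e - hk3)
        · intro h
          rcases (adj_iff (s + 1) (p + 1)).1 h with e | e
          · exact hkm (by linear_combination -e)
          · exact hk1 (by linear_combination e)
        · intro h
          exact h1z (by linear_combination h)
        · intro h
          exact hk1 (by linear_combination -h)
        · intro h
          exact hkm (by linear_combination h)
        · intro h
          exact h1z (by linear_combination h)
        · intro h
          exact hk0 (by linear_combination -h)
      · -- case (ii) : edges {s,s+1}, {p-1,p}
        push_neg at hB
        obtain ⟨hB1, hB2⟩ := hB
        refine finish (s + 1) (p - 1)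
          ((adj_iff s (s + 1)).2 (Or.inr (by ring)))
          ((adj_iff p (p - 1)).2 (Or.inl (by ring)))
          ?_ ?_ ?_ ?_ ?_ ?_ ?_ ?_
        · intro h
          rcases (adj_iff s (p - 1)).1 h with e | e
          · exact hk0 (by linear_combination -e)
          · exact hB1 (by linear_combination e)
        · intro h
          rcases (adj_iff (s + 1) p).1 h with e | e
          · exact hk0 (by linear_combination -e)
          · exact hB1 (by linear_combination e)
        · intro h
          rcases (adj_iff (s + 1) (p - 1)).1 h with e | e
          · exact hk1 (by linear_combination -e)
          · exact hB2 (by linear_combination e)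
        · intro h
          exact h1z (by linear_combination h)
        · intro h
          exact hk1 (by linear_combination -h)
        · intro h
          exact hk1 (by linear_combination h)
        · intro h
          exact h1z (by linear_combination -h)
        · intro h
          exact hB1 (by linear_combination -h)
    · -- case (i) : edges {s-1,s}, {p,p+1}
      push_neg at hA
      obtain ⟨hA1, hA2⟩ := hA
      refine finish (s - 1) (p + 1)
        ((adj_iff s (s - 1)).2 (Or.inl (by ring)))
        ((adj_iff p (p + 1)).2 (Or.inr (by ring)))
        ?_ ?_ ?_ ?_ ?_ ?_ ?_ ?_
      · intro h
        rcases (adj_iff s (p + 1)).1 h with e | e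
        · exact hA1 (by linear_combination -e)
        · exact hk0 (by linear_combination e)
      · intro h
        rcases (adj_iff (s - 1) p).1 h with e | e
        · exact hA1 (by linear_combination -e)
        · exact hk0 (by linear_combination e)
      · intro h
        rcases (adj_iff (s - 1) (p + 1)).1 h with e | e
        · exact hA2 (by linear_combination -e)
        · exact hkm (by linear_combination e)
      · intro h
        exact h1z (by linear_combination -h)
      · intro h
        exact hkm (by linear_combination -h)
      · intro h
        exact hkm (by linear_combination h)
      · intro h
        exact h1z (by linear_combination h)
      · intro h
        exact hA1 (by linear_combination -h)

/-- No cycle of length at least 5 is 12-representable; equivalently $C_n$, $n ≥ 5$,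
admits no $\{I_3,J_4,Q_4\}$-free labeling. -/
theorem cycle_not_rep12able {n : ℕ} (hn : 5 ≤ n) :
    ¬ Rep12able (SimpleGraph.cycleGraph n) ∧
    ¬ ∃ f : Fin n ≃ Fin (Fintype.card (Fin n)),
        I3J4Q4Free ((SimpleGraph.cycleGraph n).map f.toEmbedding) := by
  have part2 : ¬ ∃ f : Fin n ≃ Fin (Fintype.card (Fin n)),
      I3J4Q4Free ((SimpleGraph.cycleGraph n).map f.toEmbedding) := by
    have key : ∀ (N : ℕ), N = n → ∀ f : Fin n ≃ Fin N,
        ¬ I3J4Q4Free ((SimpleGraph.cycleGraph n).map f.toEmbedding) := by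
      rintro N rfl f
      exact partB hn f
    rintro ⟨f, hf⟩
    exact key _ (Fintype.card_fin n) f hf
  refine ⟨?_, part2⟩
  rintro ⟨f, w, hw⟩
  exact part2 ⟨f, repA hw⟩
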